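/- With g(x; y1, y2) = ln(|x − y1| + |x − y2| + |y1 − y2|), the mixed second derivative with respect to the source points satisfies ∂²g/∂y1^i ∂y2^j = (n12^i n12^j − δ^{ij})/(r12 S) + (n12^i − n1^i)(n12^j + n2^j)/S², where S = r1 + r2 + r12, n1 = (x − y1)/r1, n2 = (x − y2)/r2, n12 = (y1 − y2)/r12, valid for x ≠ y1, x ≠ y2 and y1 ≠ y2. -/

import Mathlib

noncomputable section

abbrev E3 := EuclideanSpace ℝ (Fin 3)

def e3 (i : Fin 3) : E3 := EuclideanSpace.single i 1

/-- Mixed second partial derivative `∂²f/∂y1^i ∂y2^j` of a function of two points. -/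
def d12 (i j : Fin 3) (f : E3 → E3 → ℝ) (y1 y2 : E3) : ℝ :=
  fderiv ℝ (fun z1 => fderiv ℝ (f z1) y2 (e3 j)) y1 (e3 i)


lemma hasFDerivAt_norm_v (v : E3) (hv : v ≠ 0) :
    HasFDerivAt (fun z : E3 => ‖z‖) (‖v‖⁻¹ • innerSL ℝ v) v := by
  have h1 : HasFDerivAt (fun z : E3 => ‖z‖ ^ 2) (2 • (innerSL ℝ v)) v :=
    (hasStrictFDerivAt_norm_sq v).hasFDerivAt
  have h2 := h1.sqrt (by have := norm_pos_iff.mpr hv; positivity)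
  have heq : (fun z : E3 => Real.sqrt (‖z‖ ^ 2)) = (fun z : E3 => ‖z‖) := by
    funext z; rw [Real.sqrt_sq (norm_nonneg z)]
  rw [heq] at h2
  refine h2.congr_fderiv ?_
  ext w
  have hvn : ‖v‖ ≠ 0 := norm_ne_zero_iff.mpr hv
  rw [Real.sqrt_sq (norm_nonneg v)]
  simp [smul_smul]
  field_simp

lemma inner_e3 (v : E3) (j : Fin 3) : (innerSL ℝ v) (e3 j) = v j := by
  simp [e3, EuclideanSpace.inner_single_right]

lemma hasFDerivAt_norm_const_sub (a z : E3) (h : a ≠ z) :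
    HasFDerivAt (fun w : E3 => ‖a - w‖) (-(‖a - z‖⁻¹ • innerSL ℝ (a - z))) z := by
  have hb : HasFDerivAt (fun w : E3 => a - w) (-(ContinuousLinearMap.id ℝ E3)) z := by
    simpa using (hasFDerivAt_id (𝕜 := ℝ) z).const_sub a
  have := (hasFDerivAt_norm_v (a - z) (sub_ne_zero.mpr h)).comp z hb
  refine this.congr_fderiv ?_
  ext w; simp

lemma hasFDerivAt_norm_sub_right (a z : E3) (h : z ≠ a) :
    HasFDerivAt (fun w : E3 => ‖w - a‖) (‖z - a‖⁻¹ • innerSL ℝ (z - a)) z := by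
  have hb : HasFDerivAt (fun w : E3 => w - a) (ContinuousLinearMap.id ℝ E3) z := by
    simpa using (hasFDerivAt_id z).sub_const a
  have := (hasFDerivAt_norm_v (z - a) (sub_ne_zero.mpr h)).comp z hb
  refine this.congr_fderiv ?_
  ext w; simp

lemma S_pos (x z1 z2 : E3) (h : x ≠ z2) : (0:ℝ) < ‖x - z1‖ + ‖x - z2‖ + ‖z1 - z2‖ := by
  have : (0:ℝ) < ‖x - z2‖ := norm_pos_iff.mpr (sub_ne_zero.mpr h)
  have h1 : (0:ℝ) ≤ ‖x - z1‖ := norm_nonneg _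
  have h3 : (0:ℝ) ≤ ‖z1 - z2‖ := norm_nonneg _
  linarith

lemma inner_deriv (x y2 : E3) (h2 : x ≠ y2) (j : Fin 3) (z1 : E3) (hz : z1 ≠ y2) :
    fderiv ℝ (fun z2 => Real.log (‖x - z1‖ + ‖x - z2‖ + ‖z1 - z2‖)) y2 (e3 j) =
      (-((x - y2) j) / ‖x - y2‖ - (z1 - y2) j / ‖z1 - y2‖) /
        (‖x - z1‖ + ‖x - y2‖ + ‖z1 - y2‖) := by
  have hA : HasFDerivAt (fun z2 : E3 => ‖x - z1‖ + ‖x - z2‖)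
      (-(‖x - y2‖⁻¹ • innerSL ℝ (x - y2))) y2 :=
    (hasFDerivAt_norm_const_sub x y2 h2).const_add ‖x - z1‖
  have hS := hA.add (hasFDerivAt_norm_const_sub z1 y2 hz)
  simp only [Pi.add_def] at hS
  have hpos := S_pos x z1 y2 h2
  have hlog := hS.log (ne_of_gt hpos)
  rw [hlog.fderiv]
  simp only [ContinuousLinearMap.smul_apply, ContinuousLinearMap.add_apply,
    ContinuousLinearMap.neg_apply, inner_e3, smul_eq_mul]
  have hr2 : ‖x - y2‖ ≠ 0 := norm_ne_zero_iff.mpr (sub_ne_zero.mpr h2)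
  have hr12 : ‖z1 - y2‖ ≠ 0 := norm_ne_zero_iff.mpr (sub_ne_zero.mpr hz)
  field_simp
  ring


lemma coord_hasFDerivAt (y2 z : E3) (j : Fin 3) :
    HasFDerivAt (fun w : E3 => (w - y2) j) (innerSL ℝ (e3 j)) z := by
  have h0 : HasFDerivAt (fun w : E3 => (inner ℝ (e3 j) w : ℝ)) (innerSL ℝ (e3 j)) z :=
    (innerSL ℝ (e3 j)).hasFDerivAt
  have := h0.sub_const (y2 j)
  refine HasFDerivAt.congr_of_eventuallyEq this (Filter.Eventually.of_forall fun w => ?_)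
  have : (inner ℝ (e3 j) w : ℝ) = w j := by
    rw [real_inner_comm]; exact inner_e3 w j
  simp [this]


set_option maxHeartbeats 2000000 in
/-- explicit formula for `∂²g/∂y1^i ∂y2^j`. -/
theorem mixed_derivative_log_kernel (x y1 y2 : E3)
    (h1 : x ≠ y1) (h2 : x ≠ y2) (h12 : y1 ≠ y2) (i j : Fin 3) :
    d12 i j (fun z1 z2 => Real.log (‖x - z1‖ + ‖x - z2‖ + ‖z1 - z2‖)) y1 y2 =
      (let r1 : ℝ := ‖x - y1‖
       let r2 : ℝ := ‖x - y2‖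
       let r12 : ℝ := ‖y1 - y2‖
       let S : ℝ := r1 + r2 + r12
       let n1 : Fin 3 → ℝ := fun k => (x - y1) k / r1
       let n2 : Fin 3 → ℝ := fun k => (x - y2) k / r2
       let n12 : Fin 3 → ℝ := fun k => (y1 - y2) k / r12
       (n12 i * n12 j - (if i = j then (1:ℝ) else 0)) / (r12 * S)
         + (n12 i - n1 i) * (n12 j + n2 j) / S ^ 2) := by
  have hr1 : ‖x - y1‖ ≠ 0 := norm_ne_zero_iff.mpr (sub_ne_zero.mpr h1)
  have hr2 : ‖x - y2‖ ≠ 0 := norm_ne_zero_iff.mpr (sub_ne_zero.mpr h2)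
  have hr12 : ‖y1 - y2‖ ≠ 0 := norm_ne_zero_iff.mpr (sub_ne_zero.mpr h12)
  have hSpos := S_pos x y1 y2 h2
  set φ : E3 → ℝ := fun z1 =>
    (-((x - y2) j) / ‖x - y2‖ - (z1 - y2) j * (‖z1 - y2‖)⁻¹) *
      (‖x - z1‖ + ‖x - y2‖ + ‖z1 - y2‖)⁻¹ with hφdef
  have hev : (fun z1 => fderiv ℝ
      (fun z2 => Real.log (‖x - z1‖ + ‖x - z2‖ + ‖z1 - z2‖)) y2 (e3 j)) =ᶠ[nhds y1] φ := by
    filter_upwards [isOpen_compl_singleton.mem_nhds (by simpa using h12)] with z1 hz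
    rw [inner_deriv x y2 h2 j z1 (by simpa using hz), hφdef]
    have hz' : ‖z1 - y2‖ ≠ 0 := norm_ne_zero_iff.mpr (sub_ne_zero.mpr (by simpa using hz))
    field_simp
  -- derivatives at y1
  have hq := coord_hasFDerivAt y2 y1 j
  have hn : HasFDerivAt (fun w : E3 => ‖w - y2‖)
      (‖y1 - y2‖⁻¹ • innerSL ℝ (y1 - y2)) y1 := hasFDerivAt_norm_sub_right y2 y1 h12
  have hninv := (hasDerivAt_inv hr12).comp_hasFDerivAt y1 hn
  have hu := hq.mul hninv
  have hN := hu.const_sub (-((x - y2) j) / ‖x - y2‖)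
  have hSd : HasFDerivAt (fun z1 : E3 => ‖x - z1‖ + ‖x - y2‖ + ‖z1 - y2‖)
      ((-(‖x - y1‖⁻¹ • innerSL ℝ (x - y1)) + 0) + ‖y1 - y2‖⁻¹ • innerSL ℝ (y1 - y2)) y1 :=
    ((hasFDerivAt_norm_const_sub x y1 h1).add (hasFDerivAt_const _ _)).add
      (hasFDerivAt_norm_sub_right y2 y1 h12)
  have hSinv := (hasDerivAt_inv (ne_of_gt hSpos)).comp_hasFDerivAt y1 hSd
  have hφ' := hN.mul hSinv
  simp only [Function.comp_def, Pi.mul_def] at hφ'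
  rw [d12, hev.fderiv_eq, hφ'.fderiv]
  have hee : (innerSL ℝ (e3 j)) (e3 i) = (if i = j then (1:ℝ) else 0) := by
    rw [inner_e3]
    simp [e3, EuclideanSpace.single_apply]
  simp only [ContinuousLinearMap.smul_apply, ContinuousLinearMap.add_apply,
    ContinuousLinearMap.sub_apply, ContinuousLinearMap.neg_apply,
    ContinuousLinearMap.zero_apply, inner_e3, hee, smul_eq_mul]
  show _ = ((y1 - y2) i / ‖y1 - y2‖ * ((y1 - y2) j / ‖y1 - y2‖) - (if i = j then (1:ℝ) else 0)) / (‖y1 - y2‖ * (‖x - y1‖ + ‖x - y2‖ + ‖y1 - y2‖)) + ((y1 - y2) i / ‖y1 - y2‖ - (x - y1) i / ‖x - y1‖) * ((y1 - y2) j / ‖y1 - y2‖ + (x - y2) j / ‖x - y2‖) / (‖x - y1‖ + ‖x - y2‖ + ‖y1 - y2‖) ^ 2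
  set δ : ℝ := (if i = j then (1:ℝ) else 0) with hδ
  set r1 : ℝ := ‖x - y1‖ with hr1'
  set r2 : ℝ := ‖x - y2‖ with hr2'
  set r12 : ℝ := ‖y1 - y2‖ with hr12'
  set A : ℝ := (x - y1) i with hA
  set B : ℝ := (x - y2) j with hB
  set C : ℝ := (y1 - y2) i with hC
  set D : ℝ := (y1 - y2) j with hD
  have hS0 : r1 + r2 + r12 ≠ 0 := ne_of_gt hSpos
  field_simp
  ring
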